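/- arXiv:2107.09165 — 2 statements merged into one kernel-verified Lean document; each statement's English description precedes it below -/
import Mathlib

section
/- Let K = ℚ_p^{ur} be the maximal unramified extension of ℚ_p inside a fixed algebraic closure ℚ̄_p, let ℂ_p be the completion of ℚ̄_p, and let M be the topological closure of K in ℂ_p. Then M ∩ ℚ̄_p = K: every element of ℚ̄_p that lies in the completion of ℚ_p^{ur} is already in ℚ_p^{ur}. -/
open Polynomial IntermediateField Filter

/-- Tail bound: if the first `j` coefficients of `R` vanish and `‖t‖ ≤ 1`, then
`‖R.eval t‖ ≤ (sum of coeff norms) * ‖t‖^j`. -/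
lemma eval_norm_le_aux {C : Type*} [NormedField C] (R : Polynomial C) (j : ℕ)
    (h : ∀ i < j, R.coeff i = 0) (t : C) (ht : ‖t‖ ≤ 1) :
    ‖R.eval t‖ ≤ (∑ i ∈ Finset.range (R.natDegree + 1), ‖R.coeff i‖) * ‖t‖ ^ j := by
  rw [Polynomial.eval_eq_sum_range, Finset.sum_mul]
  refine (norm_sum_le _ _).trans (Finset.sum_le_sum ?_)
  intro i _
  rcases lt_or_ge i j with hij | hij
  · simp only [h i hij, zero_mul, norm_zero]
    positivity
  · rw [norm_mul, norm_pow]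
    exact mul_le_mul_of_nonneg_left (pow_le_pow_of_le_one (norm_nonneg t) ht hij)
      (norm_nonneg _)

/-- Let `K = ℚ_p^{ur}` be the maximal unramified extension of `ℚ_p`
(equivalently, the extension of `ℚ_p` generated by all roots of unity of order prime
to `p`) inside `ℂ_p`, realized here inside an arbitrary complete ultrametric normed
field `C` which is isometrically an algebra over `ℚ_p`. Let `M` be the topological
closure of `K` in `C`. Then `M ∩ ℚ̄_p = K`: an element of `C` lying in the closure of
`K` is algebraic over `ℚ_p` if and only if it already lies in `K`. -/
theorem statement12 (p : ℕ) [Fact p.Prime]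
    (C : Type*) [NormedField C] [CompleteSpace C] [IsUltrametricDist C]
    [Algebra ℚ_[p] C] (hisom : ∀ x : ℚ_[p], ‖algebraMap ℚ_[p] C x‖ = ‖x‖)
    (K : Subfield C)
    (hK : K = Subfield.closure
      (Set.range (algebraMap ℚ_[p] C) ∪
        {x : C | ∃ m : ℕ, 0 < m ∧ Nat.Coprime m p ∧ x ^ m = 1})) :
    {x : C | x ∈ closure (K : Set C) ∧ IsAlgebraic ℚ_[p] x} = (K : Set C) := by
  letI : NormedSpace ℚ_[p] C :=
    { norm_smul_le := fun c v => by rw [Algebra.smul_def, norm_mul, hisom] }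
  have hA : ∀ c : ℚ_[p], algebraMap ℚ_[p] C c ∈ K := by
    intro c
    rw [hK]
    exact Subfield.subset_closure (Set.mem_union_left _ ⟨c, rfl⟩)
  -- every element of K is integral over ℚ_p
  have hint : ∀ y ∈ K, IsIntegral ℚ_[p] y := by
    let T : Subfield C :=
      { carrier := {z : C | IsIntegral ℚ_[p] z}
        mul_mem' := fun ha hb => ha.mul hb
        one_mem' := isIntegral_one
        add_mem' := fun ha hb => ha.add hb
        zero_mem' := isIntegral_zero
        neg_mem' := fun ha => ha.neg
        inv_mem' := fun a ha => ha.inv }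
    intro y hy
    rw [hK] at hy
    have hsub : (Set.range (algebraMap ℚ_[p] C) ∪
        {x : C | ∃ m : ℕ, 0 < m ∧ Nat.Coprime m p ∧ x ^ m = 1}) ⊆ (T : Set C) := by
      rintro z (⟨c, rfl⟩ | ⟨m, hm, -, hzm⟩)
      · exact isIntegral_algebraMap
      · refine ⟨X ^ m - Polynomial.C 1, monic_X_pow_sub_C _ hm.ne', ?_⟩
        simp [hzm]
    exact Subfield.closure_le.2 hsub hy
  -- K as an intermediate field
  let K' : IntermediateField ℚ_[p] C := Subfield.toIntermediateField K hA
  ext x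
  simp only [Set.mem_setOf_eq, SetLike.mem_coe]
  constructor
  · rintro ⟨hxc, hxa⟩
    -- setup
    have hx_int : IsIntegral ℚ_[p] x := hxa.isIntegral
    set f := minpoly ℚ_[p] x with hf
    set P : Polynomial C := f.map (algebraMap ℚ_[p] C) with hPdef
    have hPx : P.eval x = 0 := by
      rw [hPdef, eval_map, ← aeval_def, hf, minpoly.aeval]
    have hane : (derivative P).eval x ≠ 0 := by
      obtain ⟨u, v, huv⟩ := (minpoly.irreducible hx_int).separable
      intro h0
      have h1 : (derivative f).aeval x = 0 := by
        rw [hPdef, derivative_map, eval_map, ← aeval_def] at h0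
        exact h0
      have := congrArg (aeval x) huv
      simp only [map_add, map_mul, map_one, hf, minpoly.aeval, mul_zero, zero_add] at this
      rw [show (Polynomial.aeval x) (derivative (minpoly ℚ_[p] x)) = 0 from h1, mul_zero] at this
      exact zero_ne_one this
    set q1 : C := (derivative P).eval x with hq1
    have ha : (0:ℝ) < ‖q1‖ := norm_pos_iff.2 hane
    set R1 : Polynomial C := taylor x P - Polynomial.C q1 * X with hR1def
    set R2 : Polynomial C := taylor x (derivative P) - Polynomial.C q1 with hR2def
    set M1 : ℝ := ∑ i ∈ Finset.range (R1.natDegree + 1), ‖R1.coeff i‖ with hM1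
    set M2 : ℝ := ∑ i ∈ Finset.range (R2.natDegree + 1), ‖R2.coeff i‖ with hM2
    have hM1nn : 0 ≤ M1 := Finset.sum_nonneg fun _ _ => norm_nonneg _
    have hM2nn : 0 ≤ M2 := Finset.sum_nonneg fun _ _ => norm_nonneg _
    have hR1coeff : ∀ i < 2, R1.coeff i = 0 := by
      intro i hi
      interval_cases i
      · simp [hR1def, coeff_sub, taylor_coeff_zero, hPx]
      · simp [hR1def, coeff_sub, taylor_coeff_one, coeff_C_mul, hq1]
    have hR2coeff : ∀ i < 1, R2.coeff i = 0 := by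
      intro i hi
      interval_cases i
      simp [hR2def, coeff_sub, taylor_coeff_zero, hq1]
    -- evaluation identities
    have hPz : ∀ z : C, P.eval z = q1 * (z - x) + R1.eval (z - x) := by
      intro z
      have h := taylor_eval_sub x P z
      simp only [hR1def, eval_sub, eval_mul, eval_C, eval_X, h]
      ring
    have hP'z : ∀ z : C, (derivative P).eval z = q1 + R2.eval (z - x) := by
      intro z
      have h := taylor_eval_sub x (derivative P) z
      simp only [hR2def, eval_sub, eval_C, h]
      ring
    -- the radius
    set ρ : ℝ := min 1 (‖q1‖ / (4 * (M1 + M2 + 1))) with hρdef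
    have hden : (0:ℝ) < 4 * (M1 + M2 + 1) := by linarith
    have hρpos : 0 < ρ := lt_min one_pos (div_pos ha hden)
    have hρ1 : ρ ≤ 1 := min_le_left _ _
    have hρa : ρ * (M1 + M2 + 1) ≤ ‖q1‖ / 4 := by
      have : ρ ≤ ‖q1‖ / (4 * (M1 + M2 + 1)) := min_le_right _ _
      calc ρ * (M1 + M2 + 1) ≤ ‖q1‖ / (4 * (M1 + M2 + 1)) * (M1 + M2 + 1) := by
            apply mul_le_mul_of_nonneg_right this (by linarith)
        _ = ‖q1‖ / 4 := by field_simp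
    -- one Newton step
    have hstep : ∀ z : C, ‖z - x‖ ≤ ρ →
        ‖(z - P.eval z / (derivative P).eval z) - x‖ ≤ (1/2) * ‖z - x‖ := by
      intro z hz
      set t : C := z - x with htdef
      have ht1 : ‖t‖ ≤ 1 := hz.trans hρ1
      have he1 : ‖R1.eval t‖ ≤ M1 * ‖t‖ ^ 2 := eval_norm_le_aux R1 2 hR1coeff t ht1
      have he2 : ‖R2.eval t‖ ≤ M2 * ‖t‖ ^ 1 := eval_norm_le_aux R2 1 hR2coeff t ht1
      have he2' : ‖R2.eval t‖ ≤ M2 * ‖t‖ := by simpa using he2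
      have hM2t : M2 * ‖t‖ ≤ ‖q1‖ / 4 := by
        calc M2 * ‖t‖ ≤ (M1 + M2 + 1) * ρ := by
              apply mul_le_mul (by linarith) hz (norm_nonneg _) (by linarith)
          _ = ρ * (M1 + M2 + 1) := by ring
          _ ≤ ‖q1‖ / 4 := hρa
      -- denominator bound
      have hd : ‖q1‖ / 2 ≤ ‖(derivative P).eval z‖ := by
        rw [hP'z z]
        have := norm_sub_norm_le q1 (-(R2.eval t))
        have h2 : ‖q1 - -(R2.eval t)‖ = ‖q1 + R2.eval t‖ := by rw [sub_neg_eq_add]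
        rw [h2, norm_neg] at this
        have : ‖q1‖ - ‖R2.eval t‖ ≤ ‖q1 + R2.eval t‖ := this
        have hle : ‖R2.eval t‖ ≤ ‖q1‖ / 4 := he2'.trans hM2t
        linarith
      have hdne : (derivative P).eval z ≠ 0 := by
        intro h
        rw [h, norm_zero] at hd
        linarith
      -- algebraic identity for the step
      have hiden : (z - P.eval z / (derivative P).eval z) - x
          = (t * R2.eval t - R1.eval t) / (derivative P).eval z := by
        rw [hPz z, hP'z z]
        have hdne' : q1 + R2.eval t ≠ 0 := by rw [← hP'z z]; exact hdne
        simp only [htdef] at hdne' ⊢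
        field_simp
        ring
      rw [hiden, norm_div]
      have hnum : ‖t * R2.eval t - R1.eval t‖ ≤ (M1 + M2) * ‖t‖ ^ 2 := by
        calc ‖t * R2.eval t - R1.eval t‖ ≤ ‖t * R2.eval t‖ + ‖R1.eval t‖ := norm_sub_le _ _
          _ ≤ ‖t‖ * (M2 * ‖t‖) + M1 * ‖t‖ ^ 2 := by
              rw [norm_mul]
              gcongr
          _ = (M1 + M2) * ‖t‖ ^ 2 := by ring
      have hq1pos2 : (0:ℝ) < ‖q1‖ / 2 := by linarith
      calc ‖t * R2.eval t - R1.eval t‖ / ‖(derivative P).eval z‖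
          ≤ ((M1 + M2) * ‖t‖ ^ 2) / (‖q1‖ / 2) := by
            exact div_le_div₀ (by positivity) hnum hq1pos2 hd
        _ ≤ (1/2) * ‖t‖ := by
            rw [div_le_iff₀ hq1pos2] at *
            have h1 : (M1 + M2) * ‖t‖ ≤ ‖q1‖ / 4 := by
              calc (M1 + M2) * ‖t‖ ≤ (M1 + M2 + 1) * ρ := by
                    apply mul_le_mul (by linarith) hz (norm_nonneg _) (by linarith)
                _ = ρ * (M1 + M2 + 1) := by ring
                _ ≤ ‖q1‖ / 4 := hρa
            nlinarith [norm_nonneg t, sq_nonneg (‖t‖)]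
    -- pick y ∈ K close to x
    obtain ⟨y, hyK, hyx⟩ := Metric.mem_closure_iff.1 hxc ρ hρpos
    have hyx' : ‖y - x‖ ≤ ρ := by
      rw [← dist_eq_norm, dist_comm]
      exact hyx.le
    have hyint : IsIntegral ℚ_[p] y := hint y hyK
    -- the finite extension E = ℚ_p(y)
    set E : IntermediateField ℚ_[p] C := ℚ_[p]⟮y⟯ with hEdef
    haveI hfd : FiniteDimensional ℚ_[p] E := IntermediateField.adjoin.finiteDimensional hyint
    have hEK : (E : Set C) ⊆ (K : Set C) := by
      have : E ≤ K' := IntermediateField.adjoin_le_iff.2 (by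
        simp only [Set.singleton_subset_iff, SetLike.mem_coe]
        exact hyK)
      exact fun z hz => this hz
    haveI : FiniteDimensional ℚ_[p] (Subalgebra.toSubmodule E.toSubalgebra) := hfd
    have hEclosed : IsClosed (E : Set C) :=
      Submodule.closed_of_finiteDimensional (Subalgebra.toSubmodule E.toSubalgebra)
    -- polynomial evaluations stay in E
    have hPmem : ∀ z ∈ E, P.eval z ∈ E ∧ (derivative P).eval z ∈ E := by
      intro z hz
      constructor
      · have h1 : P.eval z = aeval z f := by rw [hPdef, eval_map, aeval_def]
        have h2 := Subalgebra.aeval_coe E.toSubalgebra (⟨z, hz⟩ : E.toSubalgebra) f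
        rw [h1, show z = ((⟨z, hz⟩ : E.toSubalgebra) : C) from rfl, h2]
        exact SetLike.coe_mem _
      · have h1 : (derivative P).eval z = aeval z (derivative f) := by
          rw [hPdef, derivative_map, eval_map, aeval_def]
        have h2 := Subalgebra.aeval_coe E.toSubalgebra (⟨z, hz⟩ : E.toSubalgebra) (derivative f)
        rw [h1, show z = ((⟨z, hz⟩ : E.toSubalgebra) : C) from rfl, h2]
        exact SetLike.coe_mem _
    -- Newton iteration
    set g : C → C := fun z => z - P.eval z / (derivative P).eval z with hgdef
    set seq : ℕ → C := fun n => g^[n] y with hseq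
    have hinv : ∀ n, seq n ∈ E ∧ ‖seq n - x‖ ≤ (1/2) ^ n * ρ := by
      intro n
      induction n with
      | zero =>
        refine ⟨IntermediateField.mem_adjoin_simple_self ℚ_[p] y, ?_⟩
        simpa [hseq] using hyx'
      | succ n ih =>
        obtain ⟨ihm, ihb⟩ := ih
        have hzρ : ‖seq n - x‖ ≤ ρ := by
          refine ihb.trans ?_
          calc (1/2:ℝ) ^ n * ρ ≤ 1 * ρ := by
                apply mul_le_mul_of_nonneg_right _ hρpos.le
                exact pow_le_one₀ (by norm_num) (by norm_num)
            _ = ρ := one_mul ρ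
        have hsucc : seq (n + 1) = g (seq n) := Function.iterate_succ_apply' g n y
        constructor
        · rw [hsucc, hgdef]
          obtain ⟨h1, h2⟩ := hPmem (seq n) ihm
          exact sub_mem ihm (div_mem h1 h2)
        · rw [hsucc]
          calc ‖g (seq n) - x‖ ≤ (1/2) * ‖seq n - x‖ := hstep (seq n) hzρ
            _ ≤ (1/2) * ((1/2) ^ n * ρ) := by
                apply mul_le_mul_of_nonneg_left ihb (by norm_num)
            _ = (1/2) ^ (n + 1) * ρ := by ring
    have htend : Tendsto seq atTop (nhds x) := by
      rw [tendsto_iff_norm_sub_tendsto_zero]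
      apply squeeze_zero (fun n => norm_nonneg _) (fun n => (hinv n).2)
      have := (tendsto_pow_atTop_nhds_zero_of_lt_one (by norm_num : (0:ℝ) ≤ 1/2)
        (by norm_num : (1/2:ℝ) < 1)).mul_const ρ
      simpa using this
    have hxE : x ∈ (E : Set C) :=
      hEclosed.mem_of_tendsto htend (Eventually.of_forall fun n => (hinv n).1)
    exact hEK hxE
  · intro hxK
    exact ⟨subset_closure hxK, (hint x hxK).isAlgebraic⟩
end

section
/- Let A be an abelian group, p a prime, and B = {(u_n)_{n≥0} : u_n ∈ A, p·u_{n+1} = u_n} the inverse limit of A along multiplication by p. Then the set Per(B) of periodic sequences in B is a subgroup of B, and the map (u_n) ↦ u_0 restricts to a group isomorphism from Per(B) onto the subgroup of elements of A of finite order coprime to p. -/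
/-- The group of paths in `A`: sequences `(u_n)` with `p • u_{n+1} = u_n`, viewed as an
additive subgroup of `ℕ → A`. -/
def pathsSubgroup (p : ℕ) (A : Type*) [AddCommGroup A] : AddSubgroup (ℕ → A) where
  carrier := {u | ∀ n, p • u (n + 1) = u n}
  zero_mem' := by intro n; simp
  add_mem' := by
    intro a b ha hb n
    simp only [Pi.add_apply, smul_add, ha n, hb n]
  neg_mem' := by
    intro a ha n
    simp only [Pi.neg_apply, smul_neg, ha n]

namespace Statement15Aux

variable {p : ℕ} {A : Type*} [AddCommGroup A]

set_option linter.unusedSectionVars false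

lemma pow_smul_path (u : ℕ → A) (hu : ∀ n, p • u (n + 1) = u n) :
    ∀ k n, p ^ k • u (n + k) = u n := by
  intro k
  induction k with
  | zero => intro n; simp
  | succ k ih =>
    intro n
    have h1 : n + (k + 1) = (n + k) + 1 := by ring
    rw [h1, pow_succ, mul_smul, hu (n + k), ih n]

lemma periodic_mul (u : ℕ → A) (k : ℕ) (hk : ∀ n, u (n + k) = u n) :
    ∀ j n, u (n + j * k) = u n := by
  intro j
  induction j with
  | zero => simp
  | succ j ih =>
    intro n
    have h1 : n + (j + 1) * k = (n + j * k) + k := by ring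
    rw [h1, hk, ih]

lemma pow_smul_fix {N : ℕ} {a : A} (h : N • a = a) : ∀ j, N ^ j • a = a := by
  intro j
  induction j with
  | zero => simp
  | succ j ih => rw [pow_succ', mul_smul, ih, h]

lemma smul_eq_self {m t : ℕ} {a : A} (hm : m • a = 0) (h1 : 1 ≤ t) (hd : m ∣ t - 1) :
    t • a = a := by
  obtain ⟨c, hc⟩ := hd
  have ht : t = 1 + m * c := by omega
  rw [ht, add_smul, one_smul, mul_comm, mul_smul, hm, smul_zero, add_zero]

lemma coprime_pow_sub_one (hp : p.Prime) {k : ℕ} (hk : 1 ≤ k) :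
    Nat.Coprime (p ^ k - 1) p := by
  rw [Nat.coprime_comm, Nat.Prime.coprime_iff_not_dvd hp]
  intro h
  have h2 : p ∣ p ^ k := dvd_pow_self p (by omega)
  have hpk : 1 ≤ p ^ k := Nat.one_le_pow _ _ hp.pos
  have h3 : p ^ k - (p ^ k - 1) = 1 := by omega
  have h4 : p ∣ 1 := h3 ▸ Nat.dvd_sub h2 h
  have := Nat.le_of_dvd one_pos h4
  have := hp.one_lt
  omega

lemma torsion_of_periodic (hp : p.Prime) (u : ℕ → A) (hu : ∀ n, p • u (n + 1) = u n)
    {k : ℕ} (hper : ∀ n, u (n + k) = u n) (n : ℕ) :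
    (p ^ k - 1) • u n = 0 := by
  have h1 : p ^ k • u n = u n := by
    have := pow_smul_path u hu k n
    rwa [hper n] at this
  have hpk : 1 ≤ p ^ k := Nat.one_le_pow _ _ hp.pos
  have h2 : p ^ k = (p ^ k - 1) + 1 := by omega
  rw [h2, add_smul, one_smul] at h1
  exact add_eq_right.mp h1

lemma eq_zero_of_coprime_smul {m n : ℕ} {a : A} (hco : Nat.Coprime m n)
    (hm : m • a = 0) (hn : n • a = 0) : a = 0 := by
  have h1 : addOrderOf a ∣ m := addOrderOf_dvd_of_nsmul_eq_zero hm
  have h2 : addOrderOf a ∣ n := addOrderOf_dvd_of_nsmul_eq_zero hn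
  have h3 : addOrderOf a ∣ 1 := hco ▸ Nat.dvd_gcd h1 h2
  have h4 := (addOrderOf_dvd_iff_nsmul_eq_zero).mp h3
  simpa using h4

end Statement15Aux

open Statement15Aux in
/-- The set `Per(B)` of periodic sequences in the inverse limit
`B = lim← (A ←[p]− A ⋯)` is a subgroup of `B`, and `(u_n) ↦ u_0` restricts to a group
isomorphism from `Per(B)` onto the subgroup of elements of `A` of finite order coprime
to `p`. -/
theorem statement15 (p : ℕ) (hp : p.Prime) (A : Type*) [AddCommGroup A] :
    ∃ (Per : AddSubgroup (pathsSubgroup p A)) (Tor : AddSubgroup A)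
      (e : Per ≃+ Tor),
      (∀ u : pathsSubgroup p A,
        u ∈ Per ↔ ∃ k, 1 ≤ k ∧ ∀ n, (u : ℕ → A) (n + k) = (u : ℕ → A) n) ∧
      (∀ a : A, a ∈ Tor ↔ ∃ m, 1 ≤ m ∧ Nat.Coprime m p ∧ m • a = 0) ∧
      (∀ u : Per, (e u : A) = ((u : pathsSubgroup p A) : ℕ → A) 0) := by
  classical
  set Per : AddSubgroup (pathsSubgroup p A) :=
    { carrier := {u | ∃ k, 1 ≤ k ∧ ∀ n, (u : ℕ → A) (n + k) = (u : ℕ → A) n}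
      zero_mem' := ⟨1, le_refl 1, fun n => rfl⟩
      add_mem' := by
        rintro a b ⟨k1, hk1, h1⟩ ⟨k2, hk2, h2⟩
        refine ⟨k1 * k2, Nat.mul_pos hk1 hk2, fun n => ?_⟩
        have ha : (a : ℕ → A) (n + k1 * k2) = (a : ℕ → A) n := by
          have := periodic_mul (a : ℕ → A) k1 h1 k2 n
          rwa [mul_comm k1 k2]
        have hb : (b : ℕ → A) (n + k1 * k2) = (b : ℕ → A) n :=
          periodic_mul (b : ℕ → A) k2 h2 k1 n
        simp only [AddSubgroup.coe_add, Pi.add_apply, ha, hb]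
      neg_mem' := by
        rintro a ⟨k, hk, h⟩
        exact ⟨k, hk, fun n => by simp only [AddSubgroup.coe_neg, Pi.neg_apply, h n]⟩ }
    with hPerDef
  have hPer : ∀ u : pathsSubgroup p A,
      u ∈ Per ↔ ∃ k, 1 ≤ k ∧ ∀ n, (u : ℕ → A) (n + k) = (u : ℕ → A) n :=
    fun u => Iff.rfl
  -- the evaluation-at-0 homomorphism
  set f : Per →+ A :=
    (((Pi.evalAddMonoidHom (fun _ : ℕ => A) 0).comp
      (pathsSubgroup p A).subtype).comp Per.subtype) with hfDef
  have hf : ∀ u : Per, f u = ((u : pathsSubgroup p A) : ℕ → A) 0 := fun u => rfl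
  -- injectivity
  have hinj : Function.Injective f := by
    rw [injective_iff_map_eq_zero]
    rintro ⟨⟨u, hupath⟩, k, hk, hper⟩ h0
    have h0' : u 0 = 0 := h0
    have hzero : ∀ n, u n = 0 := by
      intro n
      have hm : (p ^ k - 1) • u n = 0 := torsion_of_periodic hp u hupath hper n
      have hn : p ^ n • u n = 0 := by
        have := pow_smul_path u hupath n 0
        rwa [zero_add, h0'] at this
      exact eq_zero_of_coprime_smul ((coprime_pow_sub_one hp hk).pow_right n) hm hn
    exact Subtype.ext (Subtype.ext (funext hzero))
  -- surjectivity description of the range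
  have hTor : ∀ a : A, a ∈ f.range ↔ ∃ m, 1 ≤ m ∧ Nat.Coprime m p ∧ m • a = 0 := by
    intro a
    constructor
    · rintro ⟨⟨⟨u, hupath⟩, k, hk, hper⟩, rfl⟩
      have hple : p ≤ p ^ k := Nat.le_self_pow (by omega) p
      have hp2 := hp.two_le
      refine ⟨p ^ k - 1, by omega, coprime_pow_sub_one hp hk, ?_⟩
      exact torsion_of_periodic hp u hupath hper 0
    · rintro ⟨m, hm1, hco, hma⟩
      set t := m.totient with htDef
      have ht1 : 1 ≤ t := Nat.totient_pos.mpr (by omega)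
      set s := t - 1 with hsDef
      have hst : s + 1 = t := by omega
      have hmodeq : p ^ t ≡ 1 [MOD m] := Nat.ModEq.pow_totient (hco.symm)
      have hpt1 : 1 ≤ p ^ t := Nat.one_le_pow _ _ hp.pos
      have hdvd : m ∣ p ^ t - 1 := (Nat.modEq_iff_dvd' hpt1).mp hmodeq.symm
      have hfix : p ^ t • a = a := smul_eq_self hma hpt1 hdvd
      set u : ℕ → A := fun n => p ^ (s * n) • a with huDef
      have hupath : ∀ n, p • u (n + 1) = u n := by
        intro n
        show p • p ^ (s * (n + 1)) • a = p ^ (s * n) • a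
        rw [← mul_smul, ← pow_succ']
        have he : s * (n + 1) + 1 = s * n + t := by rw [← hst]; ring
        rw [he, pow_add, mul_smul, hfix]
      have hper : ∀ n, u (n + t) = u n := by
        intro n
        show p ^ (s * (n + t)) • a = p ^ (s * n) • a
        have he : s * (n + t) = s * n + t * s := by ring
        rw [he, pow_add, mul_smul, pow_mul p t s, pow_smul_fix hfix s]
      refine ⟨⟨⟨u, hupath⟩, t, ht1, hper⟩, ?_⟩
      show u 0 = a
      simp [huDef]
  refine ⟨Per, f.range, AddEquiv.ofBijective f.rangeRestrict
    ⟨fun x y h => hinj (Subtype.ext_iff.mp h), f.rangeRestrict_surjective⟩,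
    hPer, hTor, fun u => rfl⟩
end
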